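/- arXiv:2202.11223 — 2 statements merged into one kernel-verified Lean document; each statement's English description precedes it below -/
import Mathlib

section
/- Let g > 0, κ > 0, and define Ψ(x,t) = (1/(2√(πκt))) · exp( − ( (√2/g)·arcsinh(g x/√(2κ)) )² / (4t) ) for t > 0 and x ∈ ℝ. Then Ψ satisfies the partial differential equation ∂_t Ψ = κ ∂_x² Ψ + (g²/2)(x²∂_x² + x∂_x)Ψ on ℝ × (0,∞). -/
-- t-derivative
lemma aux_tderiv (p b t : ℝ) (hp : 0 < p) (ht : 0 < t) :
    HasDerivAt (fun τ => 1 / (2 * Real.sqrt (p * τ)) * Real.exp (-b / (4 * τ)))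
      (1 / (2 * Real.sqrt (p * t)) * Real.exp (-b / (4 * t)) * (-1 / (2 * t) + b / (4 * t ^ 2))) t := by
  have hpt : 0 < p * t := mul_pos hp ht
  have hsq : 0 < Real.sqrt (p * t) := Real.sqrt_pos.mpr hpt
  have hsq2 : Real.sqrt (p * t) ^ 2 = p * t := Real.sq_sqrt hpt.le
  have hfun : (fun τ => 1 / (2 * Real.sqrt (p * τ)) * Real.exp (-b / (4 * τ)))
      = (fun τ => (2 * Real.sqrt (p * τ))⁻¹ * Real.exp (-b / 4 * τ⁻¹)) := by
    funext τ; rw [one_div]; ring_nf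
  rw [hfun]
  have h1 : HasDerivAt (fun τ : ℝ => p * τ) p t := by
    simpa using (hasDerivAt_id t).const_mul p
  have h2 : HasDerivAt (fun τ => Real.sqrt (p * τ)) (p / (2 * Real.sqrt (p * t))) t :=
    h1.sqrt hpt.ne'
  have h3 : HasDerivAt (fun τ => 2 * Real.sqrt (p * τ)) (2 * (p / (2 * Real.sqrt (p * t)))) t :=
    h2.const_mul 2
  have h4 : HasDerivAt (fun τ => (2 * Real.sqrt (p * τ))⁻¹)
      (-(2 * (p / (2 * Real.sqrt (p * t)))) / (2 * Real.sqrt (p * t)) ^ 2) t :=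
    h3.inv (by positivity)
  have h5 : HasDerivAt (fun τ : ℝ => -b / 4 * τ⁻¹) (-b / 4 * -(t ^ 2)⁻¹) t :=
    (hasDerivAt_inv ht.ne').const_mul (-b / 4)
  have h6 := h5.exp
  have h7 := h4.mul h6
  refine h7.congr_deriv ?_
  rw [one_div]
  have : -b / (4 * t) = -b / 4 * t⁻¹ := by ring
  rw [this]
  rw [Real.exp_eq_exp.mpr this.symm] at *
  generalize hS : Real.sqrt (p * t) = S at hsq hsq2 ⊢
  field_simp
  linear_combination (4 * t) * hsq2

-- first x-derivative
lemma aux_xderiv1 (c a K t : ℝ) (ht : t ≠ 0) (y : ℝ) :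
    HasDerivAt (fun y => K * Real.exp (-(c * Real.arsinh (a * y)) ^ 2 / (4 * t)))
      (K * Real.exp (-(c * Real.arsinh (a * y)) ^ 2 / (4 * t)) *
        (-(c * Real.arsinh (a * y)) * (c * a) / (2 * t * Real.sqrt (1 + (a * y) ^ 2)))) y := by
  have hS : 0 < Real.sqrt (1 + (a * y) ^ 2) := Real.sqrt_pos.mpr (by positivity)
  have h1 : HasDerivAt (fun y : ℝ => a * y) a y := by
    simpa using (hasDerivAt_id y).const_mul a
  have hZ : HasDerivAt (fun y => c * Real.arsinh (a * y))
      (c * ((Real.sqrt (1 + (a * y) ^ 2))⁻¹ * a)) y :=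
    (((Real.hasDerivAt_arsinh (a * y)).comp y h1)).const_mul c
  have h2 : HasDerivAt (fun y => -(c * Real.arsinh (a * y)) ^ 2 / (4 * t))
      (-(2 * (c * Real.arsinh (a * y)) ^ 1 * (c * ((Real.sqrt (1 + (a * y) ^ 2))⁻¹ * a))) / (4 * t)) y :=
    ((hZ.pow 2).neg).div_const (4 * t)
  have h3 := (h2.exp).const_mul K
  refine h3.congr_deriv ?_
  field_simp
  ring

-- second x-derivative
lemma aux_xderiv2 (c a K t : ℝ) (ht : t ≠ 0) (y : ℝ) :
    HasDerivAt (fun y => K * Real.exp (-(c * Real.arsinh (a * y)) ^ 2 / (4 * t)) *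
        (-(c * Real.arsinh (a * y)) * (c * a) / (2 * t * Real.sqrt (1 + (a * y) ^ 2))))
      (K * Real.exp (-(c * Real.arsinh (a * y)) ^ 2 / (4 * t)) *
        ((c * Real.arsinh (a * y) * (c * a)) ^ 2 / (4 * t ^ 2 * Real.sqrt (1 + (a * y) ^ 2) ^ 2)
          - (c * a) ^ 2 / (2 * t * Real.sqrt (1 + (a * y) ^ 2) ^ 2)
          + c * Real.arsinh (a * y) * (c * a) * a ^ 2 * y
              / (2 * t * Real.sqrt (1 + (a * y) ^ 2) ^ 3))) y := by
  have hSpos : 0 < Real.sqrt (1 + (a * y) ^ 2) := Real.sqrt_pos.mpr (by positivity)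
  have h1 : HasDerivAt (fun y : ℝ => a * y) a y := by
    simpa using (hasDerivAt_id y).const_mul a
  have hZ : HasDerivAt (fun y => c * Real.arsinh (a * y))
      (c * ((Real.sqrt (1 + (a * y) ^ 2))⁻¹ * a)) y :=
    (((Real.hasDerivAt_arsinh (a * y)).comp y h1)).const_mul c
  have hN : HasDerivAt (fun y => -(c * Real.arsinh (a * y)) * (c * a))
      (-(c * ((Real.sqrt (1 + (a * y) ^ 2))⁻¹ * a)) * (c * a)) y :=
    (hZ.neg).mul_const (c * a)
  have hin : HasDerivAt (fun y : ℝ => 1 + (a * y) ^ 2) ((2 : ℕ) * (a * y) ^ 1 * a) y := by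
    simpa using ((h1.pow 2).const_add 1)
  have hsq : HasDerivAt (fun y => Real.sqrt (1 + (a * y) ^ 2))
      ((2 : ℕ) * (a * y) ^ 1 * a / (2 * Real.sqrt (1 + (a * y) ^ 2))) y :=
    hin.sqrt (by positivity)
  have hden : HasDerivAt (fun y => 2 * t * Real.sqrt (1 + (a * y) ^ 2))
      (2 * t * ((2 : ℕ) * (a * y) ^ 1 * a / (2 * Real.sqrt (1 + (a * y) ^ 2)))) y :=
    hsq.const_mul (2 * t)
  have hden0 : 2 * t * Real.sqrt (1 + (a * y) ^ 2) ≠ 0 := by positivity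
  have hfrac := hN.div hden hden0
  have htot := (aux_xderiv1 c a K t ht y).mul hfrac
  refine htot.congr_deriv ?_
  simp only [Pi.div_apply]
  generalize hS : Real.sqrt (1 + (a * y) ^ 2) = S at hSpos ⊢
  field_simp
  ring

/-- The function `Ψ(x,t) = (1/(2√(πκt))) exp(−((√2/g) arsinh(gx/√(2κ)))²/(4t))` solves
`∂_t Ψ = κ ∂_x² Ψ + (g²/2)(x² ∂_x² + x ∂_x) Ψ` on `ℝ × (0,∞)`. -/
theorem stmt_6 (g κ : ℝ) (hg : 0 < g) (hκ : 0 < κ)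
    (Ψ : ℝ → ℝ → ℝ)
    (hΨ : ∀ x t, Ψ x t =
      1 / (2 * Real.sqrt (Real.pi * κ * t)) *
        Real.exp (-(Real.sqrt 2 / g * Real.arsinh (g * x / Real.sqrt (2 * κ))) ^ 2 / (4 * t))) :
    ∀ (x t : ℝ), 0 < t →
      deriv (fun τ => Ψ x τ) t =
        κ * deriv (deriv (fun y => Ψ y t)) x +
          (g ^ 2 / 2) *
            (x ^ 2 * deriv (deriv (fun y => Ψ y t)) x + x * deriv (fun y => Ψ y t) x) := by
  intro x t ht
  have h2κ : (0:ℝ) < 2 * κ := by linarith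
  set a := g / Real.sqrt (2 * κ) with ha
  set c := Real.sqrt 2 / g with hc
  set K := 1 / (2 * Real.sqrt (Real.pi * κ * t)) with hK
  have harg : ∀ y : ℝ, g * y / Real.sqrt (2 * κ) = a * y := fun y => by rw [ha]; ring
  have hfun : (fun y => Ψ y t)
      = (fun y => K * Real.exp (-(c * Real.arsinh (a * y)) ^ 2 / (4 * t))) := by
    funext y
    rw [hΨ y t, harg y, ← hK]
  have hd1 : deriv (fun y => Ψ y t) = fun y =>
      K * Real.exp (-(c * Real.arsinh (a * y)) ^ 2 / (4 * t)) *
        (-(c * Real.arsinh (a * y)) * (c * a) / (2 * t * Real.sqrt (1 + (a * y) ^ 2))) := by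
    funext y
    rw [hfun]
    exact (aux_xderiv1 c a K t ht.ne' y).deriv
  have hd2 : deriv (deriv (fun y => Ψ y t)) x =
      K * Real.exp (-(c * Real.arsinh (a * x)) ^ 2 / (4 * t)) *
        ((c * Real.arsinh (a * x) * (c * a)) ^ 2 / (4 * t ^ 2 * Real.sqrt (1 + (a * x) ^ 2) ^ 2)
          - (c * a) ^ 2 / (2 * t * Real.sqrt (1 + (a * x) ^ 2) ^ 2)
          + c * Real.arsinh (a * x) * (c * a) * a ^ 2 * x
              / (2 * t * Real.sqrt (1 + (a * x) ^ 2) ^ 3)) := by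
    rw [hd1]
    exact (aux_xderiv2 c a K t ht.ne' x).deriv
  have hbt : (fun τ => Ψ x τ) = fun τ =>
      1 / (2 * Real.sqrt (Real.pi * κ * τ)) *
        Real.exp (-(c * Real.arsinh (a * x)) ^ 2 / (4 * τ)) := by
    funext τ
    rw [hΨ x τ, harg x]
  have hdt : deriv (fun τ => Ψ x τ) t =
      K * Real.exp (-(c * Real.arsinh (a * x)) ^ 2 / (4 * t)) *
        (-1 / (2 * t) + (c * Real.arsinh (a * x)) ^ 2 / (4 * t ^ 2)) := by
    rw [hbt]
    exact (aux_tderiv (Real.pi * κ) ((c * Real.arsinh (a * x)) ^ 2) t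
      (by positivity) ht).deriv
  have hd1x : deriv (fun y => Ψ y t) x =
      K * Real.exp (-(c * Real.arsinh (a * x)) ^ 2 / (4 * t)) *
        (-(c * Real.arsinh (a * x)) * (c * a) / (2 * t * Real.sqrt (1 + (a * x) ^ 2))) := by
    rw [hd1]
  rw [hdt, hd2, hd1x]
  -- algebraic facts
  have hw : c * a = (Real.sqrt κ)⁻¹ := by
    rw [hc, ha, Real.sqrt_mul (by norm_num : (0:ℝ) ≤ 2)]
    have h2 : Real.sqrt 2 ≠ 0 := by positivity
    have hkr : Real.sqrt κ ≠ 0 := by positivity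
    field_simp
  have ha2 : a ^ 2 = g ^ 2 / (2 * κ) := by
    rw [ha, div_pow, Real.sq_sqrt h2κ.le]
  have hS2 : Real.sqrt (1 + (a * x) ^ 2) ^ 2 = 1 + g ^ 2 * x ^ 2 / (2 * κ) := by
    rw [Real.sq_sqrt (by positivity), mul_pow, ha2]
    ring
  have hSpos : 0 < Real.sqrt (1 + (a * x) ^ 2) := Real.sqrt_pos.mpr (by positivity)
  have hr2 : Real.sqrt κ ^ 2 = κ := Real.sq_sqrt hκ.le
  have hr0 : (0:ℝ) < Real.sqrt κ := Real.sqrt_pos.mpr hκ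
  rw [hw, ha2]
  generalize hS : Real.sqrt (1 + (a * x) ^ 2) = S at hS2 hSpos ⊢
  generalize hr : Real.sqrt κ = r at hr2 hr0 ⊢
  generalize hE : Real.exp (-(c * Real.arsinh (a * x)) ^ 2 / (4 * t)) = E
  generalize hA : Real.arsinh (a * x) = A
  have hr0' : r ≠ 0 := hr0.ne'
  have hS0' : S ≠ 0 := hSpos.ne'
  have ht' : t ≠ 0 := ht.ne'
  have f1 : κ * S ^ 2 = κ + g ^ 2 / 2 * x ^ 2 := by
    rw [hS2]; field_simp
  have key : κ * ((c * A * r⁻¹) ^ 2 / (4 * t ^ 2 * S ^ 2) - (r⁻¹) ^ 2 / (2 * t * S ^ 2)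
        + c * A * r⁻¹ * (g ^ 2 / (2 * κ)) * x / (2 * t * S ^ 3))
      + g ^ 2 / 2 * (x ^ 2 * ((c * A * r⁻¹) ^ 2 / (4 * t ^ 2 * S ^ 2) - (r⁻¹) ^ 2 / (2 * t * S ^ 2)
            + c * A * r⁻¹ * (g ^ 2 / (2 * κ)) * x / (2 * t * S ^ 3))
          + x * (-(c * A) * r⁻¹ / (2 * t * S)))
      = -1 / (2 * t) + (c * A) ^ 2 / (4 * t ^ 2) := by
    calc κ * ((c * A * r⁻¹) ^ 2 / (4 * t ^ 2 * S ^ 2) - (r⁻¹) ^ 2 / (2 * t * S ^ 2)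
            + c * A * r⁻¹ * (g ^ 2 / (2 * κ)) * x / (2 * t * S ^ 3))
          + g ^ 2 / 2 * (x ^ 2 * ((c * A * r⁻¹) ^ 2 / (4 * t ^ 2 * S ^ 2) - (r⁻¹) ^ 2 / (2 * t * S ^ 2)
                + c * A * r⁻¹ * (g ^ 2 / (2 * κ)) * x / (2 * t * S ^ 3))
              + x * (-(c * A) * r⁻¹ / (2 * t * S)))
        = (κ * S ^ 2) * ((c * A * r⁻¹) ^ 2 / (4 * t ^ 2 * S ^ 2) - (r⁻¹) ^ 2 / (2 * t * S ^ 2)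
            + c * A * r⁻¹ * (g ^ 2 / (2 * κ)) * x / (2 * t * S ^ 3))
          + g ^ 2 / 2 * (x * (-(c * A) * r⁻¹ / (2 * t * S))) := by
          linear_combination (-((c * A * r⁻¹) ^ 2 / (4 * t ^ 2 * S ^ 2) - (r⁻¹) ^ 2 / (2 * t * S ^ 2)
            + c * A * r⁻¹ * (g ^ 2 / (2 * κ)) * x / (2 * t * S ^ 3))) * f1
      _ = -1 / (2 * t) + (c * A) ^ 2 / (4 * t ^ 2) := by
          rw [← hr2]
          field_simp
          ring
  linear_combination (-(K * E)) * key
end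

section
/- As t → ∞, the integral I(t) = ∫₀^∞ k e^{−k²t/2} coth(πk/2) dk satisfies I(t) = √(2/(πt)) + O(t^{−3/2}); more precisely, t^{1/2}·I(t) → √(2/π) as t → ∞, and t^{3/2}·(I(t) − √(2/(πt))) → π^{3/2}/(6√2). -/
open Filter

section StmtAux

open Real Set MeasureTheory

private lemma stmt10_deriv_nonneg_aux {f f' : ℝ → ℝ} (hd : ∀ x, HasDerivAt f (f' x) x)
    (hf' : ∀ x, 0 < x → 0 ≤ f' x) (h0 : f 0 = 0) {x : ℝ} (hx : 0 ≤ x) : 0 ≤ f x := by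
  have hmono : MonotoneOn f (Ici (0:ℝ)) := by
    apply monotoneOn_of_deriv_nonneg (convex_Ici 0)
      (fun y _ => (hd y).continuousAt.continuousWithinAt)
      (fun y hy => (hd y).differentiableAt.differentiableWithinAt)
    intro y hy
    rw [interior_Ici] at hy
    rw [(hd y).deriv]
    exact hf' y hy
  have := hmono self_mem_Ici hx hx
  simpa [h0] using this

private lemma stmt10_sinh_le_mul_cosh {x : ℝ} (hx : 0 ≤ x) :
    Real.sinh x ≤ x * Real.cosh x := by
  have hd : ∀ y : ℝ, HasDerivAt (fun x => x * Real.cosh x - Real.sinh x)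
      (y * Real.sinh y) y := by
    intro y
    have h := ((hasDerivAt_id' (x := y)).mul (Real.hasDerivAt_cosh y)).sub
      (Real.hasDerivAt_sinh y)
    refine h.congr_deriv ?_
    ring
  have h : (0:ℝ) ≤ x * Real.cosh x - Real.sinh x :=
    stmt10_deriv_nonneg_aux hd
      (fun y hy => by
        show (0:ℝ) ≤ y * Real.sinh y
        exact mul_nonneg hy.le (Real.sinh_nonneg_iff.mpr hy.le)) (by simp) hx
  linarith

private lemma stmt10_coth_upper {x : ℝ} (hx : 0 ≤ x) :
    3 * x * Real.cosh x ≤ (3 + x ^ 2) * Real.sinh x := by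
  have hd : ∀ y : ℝ, HasDerivAt (fun x => (3 + x ^ 2) * Real.sinh x - 3 * x * Real.cosh x)
      (y * (y * Real.cosh y - Real.sinh y)) y := by
    intro y
    have h := (((hasDerivAt_pow 2 y).const_add 3).mul (Real.hasDerivAt_sinh y)).sub
      ((((hasDerivAt_id' (x := y)).const_mul 3)).mul (Real.hasDerivAt_cosh y))
    refine h.congr_deriv ?_
    push_cast
    ring
  have h : (0:ℝ) ≤ (3 + x ^ 2) * Real.sinh x - 3 * x * Real.cosh x :=
    stmt10_deriv_nonneg_aux hd
      (fun y hy => by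
        show (0:ℝ) ≤ y * (y * Real.cosh y - Real.sinh y)
        exact mul_nonneg hy.le (by linarith [stmt10_sinh_le_mul_cosh hy.le])) (by simp) hx
  linarith

private lemma stmt10_f3_nonneg {y : ℝ} (hy : 0 ≤ y) :
    (0:ℝ) ≤ (y^4 + 21*y^2) * Real.cosh y + (12*y^3 - 21*y) * Real.sinh y := by
  nlinarith [stmt10_sinh_le_mul_cosh hy, Real.cosh_pos y, Real.sinh_nonneg_iff.mpr hy,
    mul_nonneg (pow_nonneg hy 4) (Real.cosh_pos y).le,
    mul_nonneg (mul_nonneg (by norm_num : (0:ℝ) ≤ 12) (pow_nonneg hy 3))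
      (Real.sinh_nonneg_iff.mpr hy),
    mul_nonneg hy (sub_nonneg.mpr (stmt10_sinh_le_mul_cosh hy))]

private lemma stmt10_f2_nonneg {x : ℝ} (hx : 0 ≤ x) :
    (0:ℝ) ≤ (8*x^3 - 15*x) * Real.cosh x + (x^4 - 3*x^2 + 15) * Real.sinh x := by
  have hd : ∀ y : ℝ, HasDerivAt
      (fun x => (8*x^3 - 15*x) * Real.cosh x + (x^4 - 3*x^2 + 15) * Real.sinh x)
      ((y^4 + 21*y^2) * Real.cosh y + (12*y^3 - 21*y) * Real.sinh y) y := by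
    intro y
    have h := ((((hasDerivAt_pow 3 y).const_mul 8).sub
        ((hasDerivAt_id' (x := y)).const_mul 15)).mul (Real.hasDerivAt_cosh y)).add
      ((((hasDerivAt_pow 4 y).sub ((hasDerivAt_pow 2 y).const_mul 3)).add_const 15).mul
        (Real.hasDerivAt_sinh y))
    refine h.congr_deriv ?_
    simp only [Pi.add_apply, Pi.sub_apply]
    push_cast
    ring
  exact stmt10_deriv_nonneg_aux hd (fun y hy => stmt10_f3_nonneg hy.le) (by simp) hx

private lemma stmt10_f1_nonneg {x : ℝ} (hx : 0 ≤ x) :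
    (0:ℝ) ≤ (x^4 - 15*x^2) * Real.cosh x + (4*x^3 + 15*x) * Real.sinh x := by
  have hd : ∀ y : ℝ, HasDerivAt
      (fun x => (x^4 - 15*x^2) * Real.cosh x + (4*x^3 + 15*x) * Real.sinh x)
      ((8*y^3 - 15*y) * Real.cosh y + (y^4 - 3*y^2 + 15) * Real.sinh y) y := by
    intro y
    have h := (((hasDerivAt_pow 4 y).sub ((hasDerivAt_pow 2 y).const_mul 15)).mul
        (Real.hasDerivAt_cosh y)).add
      ((((hasDerivAt_pow 3 y).const_mul 4).add ((hasDerivAt_id' (x := y)).const_mul 15)).mul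
        (Real.hasDerivAt_sinh y))
    refine h.congr_deriv ?_
    simp only [Pi.add_apply, Pi.sub_apply]
    push_cast
    ring
  exact stmt10_deriv_nonneg_aux hd (fun y hy => stmt10_f2_nonneg hy.le) (by simp) hx

private lemma stmt10_coth_lower {x : ℝ} (hx : 0 ≤ x) :
    (45 + 15*x^2 - x^4) * Real.sinh x ≤ 45 * x * Real.cosh x := by
  have hd : ∀ y : ℝ, HasDerivAt
      (fun x => 45*x * Real.cosh x - (45 + 15*x^2 - x^4) * Real.sinh x)
      ((y^4 - 15*y^2) * Real.cosh y + (4*y^3 + 15*y) * Real.sinh y) y := by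
    intro y
    have h := (((hasDerivAt_id' (x := y)).const_mul 45).mul (Real.hasDerivAt_cosh y)).sub
      ((((hasDerivAt_pow 2 y).const_mul 15).const_add 45 |>.sub (hasDerivAt_pow 4 y)).mul
        (Real.hasDerivAt_sinh y))
    refine h.congr_deriv ?_
    simp only [Pi.add_apply, Pi.sub_apply]
    push_cast
    ring
  have h := stmt10_deriv_nonneg_aux hd (fun y hy => stmt10_f1_nonneg hy.le) (by simp) hx
  have h2 : (0:ℝ) ≤ 45*x * Real.cosh x - (45 + 15*x^2 - x^4) * Real.sinh x := h
  linarith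

/-- `g k = k coth(πk/2) - 2/π`. -/
noncomputable def stmt10_g (k : ℝ) : ℝ :=
  k * (Real.cosh (Real.pi * k / 2) / Real.sinh (Real.pi * k / 2)) - 2 / Real.pi

private lemma stmt10_g_nonneg {k : ℝ} (hk : 0 < k) : 0 ≤ stmt10_g k := by
  have hy : 0 < Real.pi * k / 2 := by positivity
  have hs : 0 < Real.sinh (Real.pi * k / 2) := Real.sinh_pos_iff.mpr hy
  have hπ := Real.pi_pos
  have h := stmt10_sinh_le_mul_cosh hy.le
  rw [stmt10_g, sub_nonneg,
    show k * (Real.cosh (Real.pi * k / 2) / Real.sinh (Real.pi * k / 2))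
      = (k * Real.cosh (Real.pi * k / 2)) / Real.sinh (Real.pi * k / 2) from by ring,
    div_le_div_iff₀ hπ hs]
  nlinarith [mul_le_mul_of_nonneg_left h hπ.le]

private lemma stmt10_g_upper {k : ℝ} (hk : 0 < k) :
    stmt10_g k ≤ Real.pi * k^2 / 6 := by
  have hy : 0 < Real.pi * k / 2 := by positivity
  have hs : 0 < Real.sinh (Real.pi * k / 2) := Real.sinh_pos_iff.mpr hy
  have hπ := Real.pi_pos
  have h := stmt10_coth_upper hy.le
  have key : Real.pi * (k * Real.cosh (Real.pi * k / 2))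
      ≤ (2 + Real.pi^2 * k^2 / 6) * Real.sinh (Real.pi * k / 2) := by nlinarith [h]
  rw [stmt10_g, sub_le_iff_le_add,
    show k * (Real.cosh (Real.pi * k / 2) / Real.sinh (Real.pi * k / 2))
      = (k * Real.cosh (Real.pi * k / 2)) / Real.sinh (Real.pi * k / 2) from by ring,
    div_le_iff₀ hs]
  have h2 : k * Real.cosh (Real.pi * k / 2)
      ≤ ((2 + Real.pi^2 * k^2 / 6) * Real.sinh (Real.pi * k / 2)) / Real.pi := by
    rw [le_div_iff₀ hπ]; linarith [key]
  calc k * Real.cosh (Real.pi * k / 2)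
      ≤ ((2 + Real.pi^2 * k^2 / 6) * Real.sinh (Real.pi * k / 2)) / Real.pi := h2
    _ = (Real.pi * k ^ 2 / 6 + 2 / Real.pi) * Real.sinh (Real.pi * k / 2) := by
        field_simp; ring

private lemma stmt10_g_lower {k : ℝ} (hk : 0 < k) :
    Real.pi * k^2 / 6 - Real.pi^3 * k^4 / 360 ≤ stmt10_g k := by
  have hy : 0 < Real.pi * k / 2 := by positivity
  have hs : 0 < Real.sinh (Real.pi * k / 2) := Real.sinh_pos_iff.mpr hy
  have hπ := Real.pi_pos
  have h := stmt10_coth_lower hy.le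
  have key : (2 + Real.pi^2 * k^2 / 6 - Real.pi^4 * k^4 / 360) * Real.sinh (Real.pi * k / 2)
      ≤ Real.pi * (k * Real.cosh (Real.pi * k / 2)) := by nlinarith [h]
  rw [stmt10_g, le_sub_iff_add_le,
    show k * (Real.cosh (Real.pi * k / 2) / Real.sinh (Real.pi * k / 2))
      = (k * Real.cosh (Real.pi * k / 2)) / Real.sinh (Real.pi * k / 2) from by ring,
    le_div_iff₀ hs]
  calc (Real.pi * k ^ 2 / 6 - Real.pi ^ 3 * k ^ 4 / 360 + 2 / Real.pi)
        * Real.sinh (Real.pi * k / 2)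
      = ((2 + Real.pi^2 * k^2 / 6 - Real.pi^4 * k^4 / 360)
          * Real.sinh (Real.pi * k / 2)) / Real.pi := by field_simp; ring
    _ ≤ (Real.pi * (k * Real.cosh (Real.pi * k / 2))) / Real.pi :=
        div_le_div_of_nonneg_right key hπ.le
    _ = k * Real.cosh (Real.pi * k / 2) := by field_simp

private lemma stmt10_key {t : ℝ} (ht : 1 ≤ t) :
    Real.sqrt (2/(Real.pi*t))
        + Real.pi/6 * ((t/2) ^ (-(3:ℝ)/2) * (1/2) * Real.Gamma (3/2))
        - Real.pi^3/360 * ((t/2) ^ (-(5:ℝ)/2) * (1/2) * Real.Gamma (5/2))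
      ≤ (∫ k in Set.Ioi (0:ℝ), k * Real.exp (-k ^ 2 * t / 2) *
          (Real.cosh (Real.pi * k / 2) / Real.sinh (Real.pi * k / 2)))
    ∧ (∫ k in Set.Ioi (0:ℝ), k * Real.exp (-k ^ 2 * t / 2) *
          (Real.cosh (Real.pi * k / 2) / Real.sinh (Real.pi * k / 2)))
      ≤ Real.sqrt (2/(Real.pi*t))
        + Real.pi/6 * ((t/2) ^ (-(3:ℝ)/2) * (1/2) * Real.Gamma (3/2)) := by
  have ht0 : (0:ℝ) < t := lt_of_lt_of_le one_pos ht
  have hb : (0:ℝ) < t/2 := by linarith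
  have hπ := Real.pi_pos
  have heq : Set.EqOn
      (fun k : ℝ => k * Real.exp (-k ^ 2 * t / 2) *
        (Real.cosh (Real.pi * k / 2) / Real.sinh (Real.pi * k / 2)))
      (fun k : ℝ => Real.exp (-(t/2)*k^2) * (2/Real.pi)
        + Real.exp (-(t/2)*k^2) * stmt10_g k) (Set.Ioi 0) := by
    intro k _
    simp only [stmt10_g]
    rw [show -k^2*t/2 = -(t/2)*k^2 from by ring]
    ring
  have hint := setIntegral_congr_fun (μ := volume) measurableSet_Ioi heq
  have hI1 : IntegrableOn (fun k : ℝ => Real.exp (-(t/2)*k^2) * (2/Real.pi))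
      (Set.Ioi 0) volume :=
    ((integrable_exp_neg_mul_sq hb).mul_const _).integrableOn
  have hI2 : IntegrableOn (fun k : ℝ => k^2 * Real.exp (-(t/2)*k^2)) (Set.Ioi 0) volume := by
    apply (integrableOn_rpow_mul_exp_neg_mul_sq hb (s := 2) (by norm_num)).congr_fun
      ?_ measurableSet_Ioi
    intro k _
    show k ^ (2:ℝ) * Real.exp (-(t/2)*k^2) = k^2 * Real.exp (-(t/2)*k^2)
    rw [← Real.rpow_natCast k 2]
    norm_num
  have hI4 : IntegrableOn (fun k : ℝ => k^4 * Real.exp (-(t/2)*k^2)) (Set.Ioi 0) volume := by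
    apply (integrableOn_rpow_mul_exp_neg_mul_sq hb (s := 4) (by norm_num)).congr_fun
      ?_ measurableSet_Ioi
    intro k _
    show k ^ (4:ℝ) * Real.exp (-(t/2)*k^2) = k^4 * Real.exp (-(t/2)*k^2)
    rw [← Real.rpow_natCast k 4]
    norm_num
  have hcont : ContinuousOn (fun k : ℝ => Real.exp (-(t/2)*k^2) * stmt10_g k) (Set.Ioi 0) := by
    apply ContinuousOn.mul (Continuous.continuousOn (by fun_prop))
    apply ContinuousOn.sub ?_ continuousOn_const
    apply ContinuousOn.mul continuousOn_id
    apply ContinuousOn.div (Continuous.continuousOn (by fun_prop))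
      (Continuous.continuousOn (by fun_prop))
    intro k hk
    have hk0 : 0 < k := Set.mem_Ioi.mp hk
    exact ne_of_gt (Real.sinh_pos_iff.mpr (by positivity))
  have hptwise : ∀ k ∈ Set.Ioi (0:ℝ),
      Real.exp (-(t/2)*k^2) * stmt10_g k ≤ Real.pi/6 * (k^2 * Real.exp (-(t/2)*k^2)) := by
    intro k hk
    have hk0 : 0 < k := Set.mem_Ioi.mp hk
    calc Real.exp (-(t/2)*k^2) * stmt10_g k
        ≤ Real.exp (-(t/2)*k^2) * (Real.pi*k^2/6) :=
          mul_le_mul_of_nonneg_left (stmt10_g_upper hk0) (Real.exp_pos _).le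
      _ = Real.pi/6 * (k^2 * Real.exp (-(t/2)*k^2)) := by ring
  have hIg : IntegrableOn (fun k : ℝ => Real.exp (-(t/2)*k^2) * stmt10_g k)
      (Set.Ioi 0) volume := by
    apply Integrable.mono' (hI2.const_mul (Real.pi/6))
      (hcont.aestronglyMeasurable measurableSet_Ioi)
    filter_upwards [MeasureTheory.ae_restrict_mem measurableSet_Ioi] with k hk
    have hk0 : 0 < k := Set.mem_Ioi.mp hk
    rw [Real.norm_eq_abs,
      abs_of_nonneg (mul_nonneg (Real.exp_pos _).le (stmt10_g_nonneg hk0))]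
    exact hptwise k hk
  have hsplit : (∫ k in Set.Ioi (0:ℝ), k * Real.exp (-k ^ 2 * t / 2) *
        (Real.cosh (Real.pi * k / 2) / Real.sinh (Real.pi * k / 2)))
      = (∫ k in Set.Ioi (0:ℝ), Real.exp (-(t/2)*k^2) * (2/Real.pi))
        + (∫ k in Set.Ioi (0:ℝ), Real.exp (-(t/2)*k^2) * stmt10_g k) := by
    rw [hint, MeasureTheory.integral_add hI1 hIg]
  have hval1 : (∫ k in Set.Ioi (0:ℝ), Real.exp (-(t/2)*k^2) * (2/Real.pi))
      = Real.sqrt (2/(Real.pi*t)) := by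
    rw [MeasureTheory.integral_mul_const, integral_gaussian_Ioi,
      show Real.pi/(t/2) = 2/(Real.pi*t) * Real.pi^2 from by field_simp,
      Real.sqrt_mul (by positivity), Real.sqrt_sq hπ.le]
    field_simp
  have hA2 : (∫ k in Set.Ioi (0:ℝ), k^2 * Real.exp (-(t/2)*k^2))
      = (t/2) ^ (-(3:ℝ)/2) * (1/2) * Real.Gamma (3/2) := by
    have h := integral_rpow_mul_exp_neg_mul_rpow (p := 2) (q := 2) two_pos (by norm_num) hb
    rw [show (∫ k in Set.Ioi (0:ℝ), k^2 * Real.exp (-(t/2)*k^2))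
        = ∫ x in Set.Ioi (0:ℝ), x ^ (2:ℝ) * Real.exp (-(t/2) * x ^ (2:ℝ)) from
      setIntegral_congr_fun measurableSet_Ioi (fun k _ => by
        rw [← Real.rpow_natCast k 2]; norm_num), h]
    norm_num
  have hA4 : (∫ k in Set.Ioi (0:ℝ), k^4 * Real.exp (-(t/2)*k^2))
      = (t/2) ^ (-(5:ℝ)/2) * (1/2) * Real.Gamma (5/2) := by
    have h := integral_rpow_mul_exp_neg_mul_rpow (p := 2) (q := 4) two_pos (by norm_num) hb
    rw [show (∫ k in Set.Ioi (0:ℝ), k^4 * Real.exp (-(t/2)*k^2))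
        = ∫ x in Set.Ioi (0:ℝ), x ^ (4:ℝ) * Real.exp (-(t/2) * x ^ (2:ℝ)) from
      setIntegral_congr_fun measurableSet_Ioi (fun k _ => by
        rw [← Real.rpow_natCast k 4, ← Real.rpow_natCast k 2]; norm_num), h]
    norm_num
  have hup : (∫ k in Set.Ioi (0:ℝ), Real.exp (-(t/2)*k^2) * stmt10_g k)
      ≤ Real.pi/6 * ((t/2) ^ (-(3:ℝ)/2) * (1/2) * Real.Gamma (3/2)) := by
    have hm := setIntegral_mono_on hIg (hI2.const_mul (Real.pi/6)) measurableSet_Ioi hptwise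
    rwa [MeasureTheory.integral_const_mul, hA2] at hm
  have hlow : Real.pi/6 * ((t/2) ^ (-(3:ℝ)/2) * (1/2) * Real.Gamma (3/2))
      - Real.pi^3/360 * ((t/2) ^ (-(5:ℝ)/2) * (1/2) * Real.Gamma (5/2))
      ≤ (∫ k in Set.Ioi (0:ℝ), Real.exp (-(t/2)*k^2) * stmt10_g k) := by
    have hm := setIntegral_mono_on
      ((hI2.const_mul (Real.pi/6)).sub (hI4.const_mul (Real.pi^3/360))) hIg
      measurableSet_Ioi (fun k hk => by
        have hk0 : 0 < k := Set.mem_Ioi.mp hk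
        have := stmt10_g_lower hk0
        calc Real.pi/6 * (k^2 * Real.exp (-(t/2)*k^2))
              - Real.pi^3/360 * (k^4 * Real.exp (-(t/2)*k^2))
            = Real.exp (-(t/2)*k^2) * (Real.pi * k^2/6 - Real.pi^3 * k^4/360) := by ring
          _ ≤ Real.exp (-(t/2)*k^2) * stmt10_g k :=
            mul_le_mul_of_nonneg_left this (Real.exp_pos _).le)
    simp only [Pi.sub_apply] at hm
    rwa [MeasureTheory.integral_sub (hI2.const_mul _) (hI4.const_mul _),
      MeasureTheory.integral_const_mul, MeasureTheory.integral_const_mul, hA2, hA4] at hm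
  constructor
  · rw [hsplit, hval1]
    linarith
  · rw [hsplit, hval1]
    linarith

end StmtAux

/-- Laplace-method asymptotics of `I(t) = ∫₀^∞ k e^{−k²t/2} coth(πk/2) dk` as `t → ∞`:
`t^{1/2} I(t) → √(2/π)` and `t^{3/2}(I(t) − √(2/(πt))) → π^{3/2}/(6√2)`. -/
theorem stmt_10
    (I : ℝ → ℝ)
    (hI : ∀ t, I t = ∫ k in Set.Ioi (0 : ℝ),
      k * Real.exp (-k ^ 2 * t / 2) *
        (Real.cosh (Real.pi * k / 2) / Real.sinh (Real.pi * k / 2))) :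
    Tendsto (fun t => t ^ (1 / 2 : ℝ) * I t) atTop (nhds (Real.sqrt (2 / Real.pi))) ∧
    Tendsto (fun t => t ^ (3 / 2 : ℝ) * (I t - Real.sqrt (2 / (Real.pi * t)))) atTop
      (nhds (Real.pi ^ (3 / 2 : ℝ) / (6 * Real.sqrt 2))) := by
  have hπ := Real.pi_pos
  set L2 : ℝ := Real.pi/6 * ((2:ℝ) ^ ((3:ℝ)/2) * (1/2) * Real.Gamma (3/2)) with hL2
  set C2 : ℝ := Real.pi^3/360 * ((2:ℝ) ^ ((5:ℝ)/2) * (1/2) * Real.Gamma (5/2)) with hC2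
  -- value of L2
  have hG32 : Real.Gamma (3/2) = Real.sqrt Real.pi / 2 := by
    rw [show (3/2:ℝ) = 1/2 + 1 by norm_num, Real.Gamma_add_one (by norm_num),
      Real.Gamma_one_half_eq]
    ring
  have h232 : (2:ℝ) ^ ((3:ℝ)/2) = 2 * Real.sqrt 2 := by
    rw [show ((3:ℝ)/2) = 1 + 1/2 by norm_num, Real.rpow_add two_pos, Real.rpow_one,
      ← Real.sqrt_eq_rpow]
  have hπ32 : Real.pi ^ ((3:ℝ)/2) = Real.pi * Real.sqrt Real.pi := by
    rw [show ((3:ℝ)/2) = 1 + 1/2 by norm_num, Real.rpow_add hπ, Real.rpow_one,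
      ← Real.sqrt_eq_rpow]
  have hs2 : Real.sqrt 2 * Real.sqrt 2 = 2 := Real.mul_self_sqrt (by norm_num)
  have hs2ne : Real.sqrt 2 ≠ 0 := ne_of_gt (Real.sqrt_pos.mpr (by norm_num))
  have hL2val : L2 = Real.pi ^ ((3:ℝ)/2) / (6 * Real.sqrt 2) := by
    rw [hL2, hG32, h232, hπ32, eq_div_iff (by positivity)]
    linear_combination (Real.pi * Real.sqrt Real.pi / 2) * hs2
  -- per-t bounds
  have hmain : ∀ t : ℝ, 1 ≤ t →
      (L2 - C2 * t ^ (-(1:ℝ)) ≤ t ^ ((3:ℝ)/2) * (I t - Real.sqrt (2/(Real.pi*t))) ∧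
        t ^ ((3:ℝ)/2) * (I t - Real.sqrt (2/(Real.pi*t))) ≤ L2) ∧
      (Real.sqrt (2/Real.pi) + L2 * t ^ (-(1:ℝ)) - C2 * t ^ (-(2:ℝ)) ≤ t ^ ((1:ℝ)/2) * I t ∧
        t ^ ((1:ℝ)/2) * I t ≤ Real.sqrt (2/Real.pi) + L2 * t ^ (-(1:ℝ))) := by
    intro t ht
    have ht0 : (0:ℝ) < t := lt_of_lt_of_le one_pos ht
    have hb : (0:ℝ) < t/2 := by linarith
    have hgen : ∀ r s : ℝ, t ^ r * (t/2) ^ (-s) = 2 ^ s * t ^ (r - s) := by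
      intro r s
      rw [Real.rpow_neg hb.le, Real.div_rpow ht0.le (by norm_num : (0:ℝ) ≤ 2),
        Real.rpow_sub ht0]
      have h1 : (t:ℝ) ^ s ≠ 0 := (Real.rpow_pos_of_pos ht0 s).ne'
      have h2 : ((2:ℝ)) ^ s ≠ 0 := (Real.rpow_pos_of_pos two_pos s).ne'
      field_simp
    have e1 : t ^ ((3:ℝ)/2) * (t/2) ^ (-(3:ℝ)/2) = 2 ^ ((3:ℝ)/2) := by
      rw [neg_div, hgen]
      norm_num
    have e2 : t ^ ((3:ℝ)/2) * (t/2) ^ (-(5:ℝ)/2) = 2 ^ ((5:ℝ)/2) * t ^ (-(1:ℝ)) := by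
      rw [neg_div, hgen]
      norm_num
    have e3 : t ^ ((1:ℝ)/2) * (t/2) ^ (-(3:ℝ)/2) = 2 ^ ((3:ℝ)/2) * t ^ (-(1:ℝ)) := by
      rw [neg_div, hgen]
      norm_num
    have e4 : t ^ ((1:ℝ)/2) * (t/2) ^ (-(5:ℝ)/2) = 2 ^ ((5:ℝ)/2) * t ^ (-(2:ℝ)) := by
      rw [neg_div, hgen]
      norm_num
    obtain ⟨hlo, hup⟩ := stmt10_key ht
    rw [← hI t] at hlo hup
    have hA : I t - Real.sqrt (2/(Real.pi*t))
        ≤ Real.pi/6 * ((t/2) ^ (-(3:ℝ)/2) * (1/2) * Real.Gamma (3/2)) := by linarith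
    have hB : Real.pi/6 * ((t/2) ^ (-(3:ℝ)/2) * (1/2) * Real.Gamma (3/2))
        - Real.pi^3/360 * ((t/2) ^ (-(5:ℝ)/2) * (1/2) * Real.Gamma (5/2))
        ≤ I t - Real.sqrt (2/(Real.pi*t)) := by linarith
    have hτ : (0:ℝ) ≤ t ^ ((3:ℝ)/2) := Real.rpow_nonneg ht0.le _
    have hσ : (0:ℝ) ≤ t ^ ((1:ℝ)/2) := Real.rpow_nonneg ht0.le _
    have eA : t ^ ((3:ℝ)/2) * (Real.pi/6 * ((t/2) ^ (-(3:ℝ)/2) * (1/2) * Real.Gamma (3/2)))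
        = L2 := by
      rw [hL2, show t ^ ((3:ℝ)/2) * (Real.pi/6 * ((t/2) ^ (-(3:ℝ)/2) * (1/2)
            * Real.Gamma (3/2)))
          = Real.pi/6 * ((t ^ ((3:ℝ)/2) * (t/2) ^ (-(3:ℝ)/2)) * (1/2) * Real.Gamma (3/2))
        from by ring, e1]
    have eB : t ^ ((3:ℝ)/2) * (Real.pi^3/360 * ((t/2) ^ (-(5:ℝ)/2) * (1/2)
          * Real.Gamma (5/2))) = C2 * t ^ (-(1:ℝ)) := by
      rw [hC2, show t ^ ((3:ℝ)/2) * (Real.pi^3/360 * ((t/2) ^ (-(5:ℝ)/2) * (1/2)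
            * Real.Gamma (5/2)))
          = Real.pi^3/360 * ((t ^ ((3:ℝ)/2) * (t/2) ^ (-(5:ℝ)/2)) * (1/2) * Real.Gamma (5/2))
        from by ring, e2]
      ring
    have eC : t ^ ((1:ℝ)/2) * (Real.pi/6 * ((t/2) ^ (-(3:ℝ)/2) * (1/2) * Real.Gamma (3/2)))
        = L2 * t ^ (-(1:ℝ)) := by
      rw [hL2, show t ^ ((1:ℝ)/2) * (Real.pi/6 * ((t/2) ^ (-(3:ℝ)/2) * (1/2)
            * Real.Gamma (3/2)))
          = Real.pi/6 * ((t ^ ((1:ℝ)/2) * (t/2) ^ (-(3:ℝ)/2)) * (1/2) * Real.Gamma (3/2))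
        from by ring, e3]
      ring
    have eD : t ^ ((1:ℝ)/2) * (Real.pi^3/360 * ((t/2) ^ (-(5:ℝ)/2) * (1/2)
          * Real.Gamma (5/2))) = C2 * t ^ (-(2:ℝ)) := by
      rw [hC2, show t ^ ((1:ℝ)/2) * (Real.pi^3/360 * ((t/2) ^ (-(5:ℝ)/2) * (1/2)
            * Real.Gamma (5/2)))
          = Real.pi^3/360 * ((t ^ ((1:ℝ)/2) * (t/2) ^ (-(5:ℝ)/2)) * (1/2) * Real.Gamma (5/2))
        from by ring, e4]
      ring
    have hsq : t ^ ((1:ℝ)/2) * Real.sqrt (2/(Real.pi*t)) = Real.sqrt (2/Real.pi) := by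
      rw [show (2:ℝ)/(Real.pi*t) = (2/Real.pi)/t from by ring,
        Real.sqrt_div (by positivity) t, ← Real.sqrt_eq_rpow]
      have hst : Real.sqrt t ≠ 0 := ne_of_gt (Real.sqrt_pos.mpr ht0)
      field_simp
    constructor
    · constructor
      · have m1 := mul_le_mul_of_nonneg_left hB hτ
        rw [mul_sub] at m1
        rw [eA, eB] at m1
        linarith
      · have m2 := mul_le_mul_of_nonneg_left hA hτ
        rw [eA] at m2
        linarith
    · have hIs : I t = Real.sqrt (2/(Real.pi*t)) + (I t - Real.sqrt (2/(Real.pi*t))) := by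
        ring
      constructor
      · have m1 := mul_le_mul_of_nonneg_left hB hσ
        rw [mul_sub] at m1
        rw [eC, eD] at m1
        calc Real.sqrt (2/Real.pi) + L2 * t ^ (-(1:ℝ)) - C2 * t ^ (-(2:ℝ))
            ≤ Real.sqrt (2/Real.pi)
              + t ^ ((1:ℝ)/2) * (I t - Real.sqrt (2/(Real.pi*t))) := by linarith
          _ = t ^ ((1:ℝ)/2) * I t := by rw [← hsq]; ring
      · have m2 := mul_le_mul_of_nonneg_left hA hσ
        rw [eC] at m2
        calc t ^ ((1:ℝ)/2) * I t
            = Real.sqrt (2/Real.pi)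
              + t ^ ((1:ℝ)/2) * (I t - Real.sqrt (2/(Real.pi*t))) := by rw [← hsq]; ring
          _ ≤ Real.sqrt (2/Real.pi) + L2 * t ^ (-(1:ℝ)) := by linarith
  have hT1 : Tendsto (fun t : ℝ => t ^ (-(1:ℝ))) atTop (nhds 0) := tendsto_rpow_neg_atTop one_pos
  have hT2 : Tendsto (fun t : ℝ => t ^ (-(2:ℝ))) atTop (nhds 0) := tendsto_rpow_neg_atTop two_pos
  have hg1 : Tendsto (fun t : ℝ => Real.sqrt (2/Real.pi) + L2 * t ^ (-(1:ℝ))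
      - C2 * t ^ (-(2:ℝ))) atTop (nhds (Real.sqrt (2/Real.pi))) := by
    have h := ((hT1.const_mul L2).const_add (Real.sqrt (2/Real.pi))).sub (hT2.const_mul C2)
    simpa using h
  have hg2 : Tendsto (fun t : ℝ => Real.sqrt (2/Real.pi) + L2 * t ^ (-(1:ℝ))) atTop
      (nhds (Real.sqrt (2/Real.pi))) := by
    have h := (hT1.const_mul L2).const_add (Real.sqrt (2/Real.pi))
    simpa using h
  have hg3 : Tendsto (fun t : ℝ => L2 - C2 * t ^ (-(1:ℝ))) atTop (nhds L2) := by
    have h := (hT1.const_mul C2).const_sub L2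
    simpa using h
  constructor
  · refine tendsto_of_tendsto_of_tendsto_of_le_of_le' hg1 hg2 ?_ ?_
    · filter_upwards [eventually_ge_atTop (1:ℝ)] with t ht
      exact ((hmain t ht).2).1
    · filter_upwards [eventually_ge_atTop (1:ℝ)] with t ht
      exact ((hmain t ht).2).2
  · rw [← hL2val]
    refine tendsto_of_tendsto_of_tendsto_of_le_of_le' hg3
      (tendsto_const_nhds (x := L2)) ?_ ?_
    · filter_upwards [eventually_ge_atTop (1:ℝ)] with t ht
      exact ((hmain t ht).1).1
    · filter_upwards [eventually_ge_atTop (1:ℝ)] with t ht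
      exact ((hmain t ht).1).2
end
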